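/- Let G be a minimal counterexample to Ohba's Conjecture with bad list assignment L, let C = ⋃_v L(v), and let B be the bipartite graph on (V(G), C) with v adjacent to each colour in L(v). Then B contains a matching saturating C. -/

import Mathlib

/-- `f` is an acceptable colouring for the list assignment `L` on `G`:
it is proper and each vertex gets a colour from its list. -/
def IsListColoring {V : Type} (G : SimpleGraph V) (L : V → Finset ℕ) (f : V → ℕ) : Prop :=
  (∀ v, f v ∈ L v) ∧ ∀ ⦃u w : V⦄, G.Adj u w → f u ≠ f w

/-- `G` is `L`-colourable. -/
def ListColorable {V : Type} (G : SimpleGraph V) (L : V → Finset ℕ) : Prop :=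
  ∃ f, IsListColoring G L f

/-- `G` is `k`-choosable: `L`-colourable whenever every list has size at least `k`. -/
def Choosable {V : Type} (G : SimpleGraph V) (k : ℕ) : Prop :=
  ∀ L : V → Finset ℕ, (∀ v, k ≤ (L v).card) → ListColorable G L

/-- The list chromatic number of `G`. -/
noncomputable def listChromaticNumber {V : Type} (G : SimpleGraph V) : ℕ :=
  sInf {k | Choosable G k}

open Finset
open scoped Classical

/-- The set `C` of all colours appearing in some list. -/
noncomputable def colorSet {V : Type} [Fintype V] (L : V → Finset ℕ) : Finset ℕ :=
  Finset.univ.biUnion L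

/-- `N_B(c)`: the set of vertices whose list contains the colour `c`. -/
noncomputable def NB {V : Type} [Fintype V] (L : V → Finset ℕ) (c : ℕ) : Finset V :=
  Finset.univ.filter (fun v => c ∈ L v)

/-- `γ = |V(G)| - |C|`. -/
noncomputable def gam (V : Type) [Fintype V] (L : V → Finset ℕ) : ℕ :=
  Fintype.card V - (colorSet L).card

/-- The part (maximal stable set) of the complete multipartite graph with index `i`. -/
noncomputable def part {V : Type} [Fintype V] {k : ℕ} (p : V → Fin k) (i : Fin k) : Finset V :=
  Finset.univ.filter (fun v => p v = i)

/-- `v` is a singleton: the part containing `v` has exactly one element. -/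
def IsSingleton {V : Type} [Fintype V] {k : ℕ} (p : V → Fin k) (v : V) : Prop :=
  (part p (p v)).card = 1

/-- `b`: the number of non-singleton parts. -/
noncomputable def numBigParts {V : Type} [Fintype V] {k : ℕ} (p : V → Fin k) : ℕ :=
  (Finset.univ.filter (fun i : Fin k => 2 ≤ (part p i).card)).card

/-- A colour is globally frequent if it appears in the lists of at least `k+1` vertices. -/
def GloballyFrequent {V : Type} [Fintype V] (L : V → Finset ℕ) (k : ℕ) (c : ℕ) : Prop :=
  k + 1 ≤ (NB L c).card

/-- A colour is frequent among singletons if it appears in the lists of at least `γ`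
singletons. -/
def FrequentAmongSingletons {V : Type} [Fintype V] {k : ℕ} (p : V → Fin k)
    (L : V → Finset ℕ) (c : ℕ) : Prop :=
  gam V L ≤ (Finset.univ.filter (fun v => IsSingleton p v ∧ c ∈ L v)).card

/-- A colour is frequent if it is globally frequent or frequent among singletons. -/
def Frequent {V : Type} [Fintype V] {k : ℕ} (p : V → Fin k) (L : V → Finset ℕ) (c : ℕ) : Prop :=
  GloballyFrequent L k c ∨ FrequentAmongSingletons p L c

/-- A proper colouring `f : V → C` is near-acceptable for `L` if every vertex `v` satisfies
`f v ∈ L v`, or `f v` is frequent and `v` is the unique vertex coloured `f v`. -/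
def NearAcceptable {V : Type} [Fintype V] {k : ℕ} (G : SimpleGraph V) (p : V → Fin k)
    (L : V → Finset ℕ) (f : V → ℕ) : Prop :=
  (∀ v, f v ∈ colorSet L) ∧ (∀ ⦃u w : V⦄, G.Adj u w → f u ≠ f w) ∧
    ∀ v, f v ∈ L v ∨ (Frequent p L (f v) ∧ ∀ u, f u = f v → u = v)

/-- `L` is a maximal bad list assignment: adding any colour of `C` to any list makes `G`
colourable. -/
def MaximalBad {V : Type} [Fintype V] (G : SimpleGraph V) (L : V → Finset ℕ) : Prop :=
  ∀ v c, c ∈ colorSet L → c ∉ L v →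
    ListColorable G (Function.update L v (insert c (L v)))

/-- A minimal counterexample to Ohba's conjecture: `G` is a complete `k`-partite graph
(with part-indexing map `p`) on at most `2k+1` vertices, `L` is a list assignment with all
lists of size at least `k` for which `G` is not `L`-colourable (so `χ_ℓ(G) > k = χ(G)`),
and every graph on fewer vertices satisfies Ohba's conjecture. -/
structure MinCex (V : Type) [Fintype V] (G : SimpleGraph V) (k : ℕ)
    (p : V → Fin k) (L : V → Finset ℕ) : Prop where
  adj_iff : ∀ u v, G.Adj u v ↔ p u ≠ p v
  surj : Function.Surjective p
  card_le : Fintype.card V ≤ 2 * k + 1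
  lists : ∀ v, k ≤ (L v).card
  bad : ¬ ListColorable G L
  minimal : ∀ (W : Type) [Fintype W] (H : SimpleGraph W) (j : ℕ),
    Fintype.card W < Fintype.card V → H.chromaticNumber = (j : ℕ∞) →
    Fintype.card W ≤ 2 * j + 1 → listChromaticNumber H = j

-- SDR lemma
lemma exists_sdr {ι : Type} [Fintype ι] (t : ι → Finset ℕ)
    (hbig : ∀ i, Fintype.card ι ≤ (t i).card) :
    ∃ f : ι → ℕ, Function.Injective f ∧ ∀ i, f i ∈ t i := by
  apply (Finset.all_card_le_biUnion_card_iff_exists_injective t).mp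
  intro s
  rcases s.eq_empty_or_nonempty with rfl | ⟨i, hi⟩
  · simp
  · calc s.card ≤ Fintype.card ι := by simpa using Finset.card_le_card (Finset.subset_univ s)
    _ ≤ (t i).card := hbig i
    _ ≤ (s.biUnion t).card := Finset.card_le_card (Finset.subset_biUnion_of_mem t hi)

lemma choosable_card {W : Type} [Fintype W] (H : SimpleGraph W) :
    Choosable H (Fintype.card W) := by
  intro L hL
  obtain ⟨f, hinj, hmem⟩ := exists_sdr L hL
  exact ⟨f, hmem, fun u w hadj he => H.ne_of_adj hadj (hinj he)⟩

lemma chromaticNumber_eq_of_parts {W : Type} [Fintype W] {j : ℕ} (H : SimpleGraph W)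
    (q : W → Fin j) (hq : Function.Surjective q)
    (hadj : ∀ u w, H.Adj u w ↔ q u ≠ q w) : H.chromaticNumber = (j : ℕ∞) := by
  apply le_antisymm
  · exact SimpleGraph.Colorable.chromaticNumber_le
      ⟨SimpleGraph.Coloring.mk q (fun {u w} h => (hadj u w).mp h)⟩
  · choose σ hσ using hq
    have hinj : Function.Injective σ := by
      intro a b hab
      rw [← hσ a, ← hσ b, hab]
    have hclique : H.IsClique (Finset.image σ Finset.univ : Finset W) := by
      intro u hu w hw huw
      simp only [Finset.coe_image, Finset.coe_univ, Set.image_univ, Set.mem_range] at hu hw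
      obtain ⟨a, rfl⟩ := hu
      obtain ⟨b, rfl⟩ := hw
      rw [hadj]
      intro hcon
      apply huw
      have hab : a = b := by rw [← hσ a, ← hσ b, hcon]
      rw [hab]
    have hle := hclique.card_le_chromaticNumber
    rwa [Finset.card_image_of_injective _ hinj, Finset.card_univ, Fintype.card_fin] at hle

/-- In a minimal counterexample, the vertex-colour bipartite graph `B` has a matching
saturating `C`; equivalently there is an injection `h : C → V(G)` with `c ∈ L(h c)`. -/
theorem stmt_4 (V : Type) [Fintype V] (G : SimpleGraph V) (k : ℕ) (p : V → Fin k)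
    (L : V → Finset ℕ) (h : MinCex V G k p L) :
    ∃ m : ℕ → V, Set.InjOn m ↑(colorSet L) ∧ ∀ c ∈ colorSet L, c ∈ L (m c) := by
  classical
  have hVne : Nonempty V := by
    by_contra hne
    rw [not_nonempty_iff] at hne
    exact h.bad ⟨fun _ => 0, fun v => (hne.false v).elim, fun u w hadj => (hne.false u).elim⟩
  by_cases hHall : ∀ S : Finset ℕ, S ⊆ colorSet L → S.card ≤ (S.biUnion (NB L)).card
  · -- Hall's condition holds: extract the matching
    have hsub : ∀ s : Finset {c // c ∈ colorSet L},
        s.card ≤ (s.biUnion fun c => NB L c.1).card := by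
      intro s
      have h1 : (s.image Subtype.val).card = s.card :=
        Finset.card_image_of_injective _ Subtype.val_injective
      have h2 : (s.image Subtype.val).biUnion (NB L) = s.biUnion fun c => NB L c.1 :=
        Finset.image_biUnion
      have h3 : s.image Subtype.val ⊆ colorSet L := by
        intro c hc
        simp only [Finset.mem_image] at hc
        obtain ⟨⟨c', hc'⟩, _, rfl⟩ := hc
        exact hc'
      have := hHall _ h3
      rw [h1, h2] at this
      exact this
    obtain ⟨f, hinj, hmem⟩ :=
      (Finset.all_card_le_biUnion_card_iff_exists_injective
        (fun c : {c // c ∈ colorSet L} => NB L c.1)).mp hsub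
    refine ⟨fun n => if hn : n ∈ colorSet L then f ⟨n, hn⟩ else Classical.arbitrary V, ?_, ?_⟩
    · intro a ha b hb hab
      rw [Finset.mem_coe] at ha hb
      simp only [dif_pos ha, dif_pos hb] at hab
      simpa using congrArg Subtype.val (hinj hab)
    · intro c hc
      simp only [dif_pos hc]
      have := hmem ⟨c, hc⟩
      simp only [NB, Finset.mem_filter] at this
      exact this.2
  · exfalso
    push_neg at hHall
    obtain ⟨S₀, hS₀sub, hS₀⟩ := hHall
    obtain ⟨A, hAmem, hAmax⟩ := Finset.exists_max_image (colorSet L).powerset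
      (fun B => (B.card : ℤ) - ((B.biUnion (NB L)).card : ℤ)) ⟨∅, by simp⟩
    have hAsub : A ⊆ colorSet L := Finset.mem_powerset.mp hAmem
    set D : Finset V := A.biUnion (NB L) with hDdef
    have hmemD : ∀ v : V, v ∈ D ↔ ∃ c ∈ A, c ∈ L v := by
      intro v
      simp [hDdef, NB, Finset.mem_biUnion, Finset.mem_filter]
    have hdef1 : (D.card : ℤ) + 1 ≤ (A.card : ℤ) := by
      have h1 := hAmax S₀ (Finset.mem_powerset.mpr hS₀sub)
      omega
    have hAne : A.Nonempty := by
      apply Finset.nonempty_of_ne_empty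
      rintro rfl
      simp only [Finset.card_empty, Nat.cast_zero] at hdef1
      omega
    have hDne : D.Nonempty := by
      obtain ⟨c, hc⟩ := hAne
      have hcC := hAsub hc
      simp only [colorSet, Finset.mem_biUnion, Finset.mem_univ, true_and] at hcC
      obtain ⟨v, hv⟩ := hcC
      exact ⟨v, (hmemD v).mpr ⟨c, hc, hv⟩⟩
    have hd1 : 1 ≤ D.card := Finset.card_pos.mpr hDne
    have hAout : ∀ v : V, v ∉ D → ∀ c ∈ A, c ∉ L v := by
      intro v hvD c hcA hcL
      exact hvD ((hmemD v).mpr ⟨c, hcA, hcL⟩)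
    -- vertex-side Hall for D into A
    have hHallD : ∀ s : Finset {v // v ∈ D}, s.card ≤ (s.biUnion fun v => L v.1 ∩ A).card := by
      intro s
      set T : Finset V := s.image Subtype.val with hTdef
      set U : Finset ℕ := s.biUnion (fun v => L v.1 ∩ A) with hUdef
      have hUA : U ⊆ A := by
        intro c hc
        rw [hUdef, Finset.mem_biUnion] at hc
        obtain ⟨v, _, hv⟩ := hc
        exact (Finset.mem_inter.mp hv).2
      have hTD : T ⊆ D := by
        intro v hv
        rw [hTdef, Finset.mem_image] at hv
        obtain ⟨⟨v', hv'⟩, _, rfl⟩ := hv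
        exact hv'
      have hTcard : T.card = s.card := Finset.card_image_of_injective _ Subtype.val_injective
      have hNsub : (A \ U).biUnion (NB L) ⊆ D \ T := by
        intro v hv
        rw [Finset.mem_biUnion] at hv
        obtain ⟨c, hcAU, hcNB⟩ := hv
        rw [Finset.mem_sdiff] at hcAU
        have hcL : c ∈ L v := by simpa [NB] using hcNB
        rw [Finset.mem_sdiff]
        refine ⟨(hmemD v).mpr ⟨c, hcAU.1, hcL⟩, fun hvT => ?_⟩
        apply hcAU.2
        rw [hUdef, Finset.mem_biUnion]
        rw [hTdef, Finset.mem_image] at hvT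
        obtain ⟨x, hxs, hxv⟩ := hvT
        refine ⟨x, hxs, Finset.mem_inter.mpr ⟨by rw [hxv]; exact hcL, hcAU.1⟩⟩
      have h1 : ((A \ U).biUnion (NB L)).card ≤ (D \ T).card := Finset.card_le_card hNsub
      have h1' : (D \ T).card = D.card - T.card := Finset.card_sdiff_of_subset hTD
      have h2 : (A \ U).card = A.card - U.card := Finset.card_sdiff_of_subset hUA
      have h3 := hAmax (A \ U) (Finset.mem_powerset.mpr (Finset.sdiff_subset.trans hAsub))
      have h4 : U.card ≤ A.card := Finset.card_le_card hUA
      have h5 : T.card ≤ D.card := Finset.card_le_card hTD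
      omega
    obtain ⟨g, hginj, hgmem⟩ :=
      (Finset.all_card_le_biUnion_card_iff_exists_injective
        (fun v : {v // v ∈ D} => L v.1 ∩ A)).mp hHallD
    have hgA : ∀ v, g v ∈ A := fun v => (Finset.mem_inter.mp (hgmem v)).2
    have hgL : ∀ v, g v ∈ L v.1 := fun v => (Finset.mem_inter.mp (hgmem v)).1
    -- parts
    set KP : Finset (Fin k) := Finset.univ.filter (fun i => part p i ⊆ D) with hKP
    set RP : Finset (Fin k) := Finset.univ.filter (fun i => ¬ part p i ⊆ D) with hRP
    set p₀ := KP.card with hp₀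
    have hRPKP : RP = Finset.univ \ KP := by
      ext i
      simp [hRP, hKP]
    have hp₀k : p₀ ≤ k := by
      rw [hp₀, hKP]
      calc (Finset.univ.filter (fun i => part p i ⊆ D)).card ≤ (Finset.univ : Finset (Fin k)).card :=
        Finset.card_le_card (Finset.filter_subset _ _)
      _ = k := by simp
    have hRPcard : RP.card = k - p₀ := by
      rw [hRPKP, Finset.card_sdiff_of_subset (Finset.subset_univ _), Finset.card_univ, Fintype.card_fin, hp₀]
    obtain ⟨σ, hσ⟩ := h.surj.hasRightInverse
    have hp₀d : p₀ ≤ D.card := by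
      rw [hp₀]
      apply Finset.card_le_card_of_injOn σ
      · intro i hi
        rw [hKP, Finset.mem_coe, Finset.mem_filter] at hi
        exact hi.2 (by simp [part, hσ i])
      · intro i _ j _ hij
        rw [← hσ i, ← hσ j, hij]
    have hexrep : ∀ i : Fin k, i ∈ RP → ∃ v, p v = i ∧ v ∉ D := by
      intro i hi
      rw [hRP, Finset.mem_filter] at hi
      obtain ⟨v, hv1, hv2⟩ := Finset.not_subset.mp hi.2
      rw [part, Finset.mem_filter] at hv1
      exact ⟨v, hv1.2, hv2⟩
    choose r hr1 hr2 using hexrep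
    set R : Finset V := RP.attach.image (fun x => r x.1 x.2) with hRdef
    have hRcard : R.card = k - p₀ := by
      have hinjR : Set.InjOn (fun x : {a // a ∈ RP} => r x.1 x.2) RP.attach := by
        intro x _ y _ hxy
        exact Subtype.ext (by rw [← hr1 x.1 x.2, ← hr1 y.1 y.2]; simp only at hxy; rw [hxy])
      rw [hRdef, Finset.card_image_of_injOn hinjR, Finset.card_attach, hRPcard]
    have hDcard_le : D.card ≤ Fintype.card V := by
      calc D.card ≤ (Finset.univ : Finset V).card := Finset.card_le_card (Finset.subset_univ D)
      _ = Fintype.card V := Finset.card_univ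
    have hUD : (Finset.univ \ D).card = Fintype.card V - D.card := by
      rw [Finset.card_sdiff_of_subset (Finset.subset_univ D), Finset.card_univ]
    have hRsub : R ⊆ Finset.univ \ D := by
      intro v hv
      rw [hRdef, Finset.mem_image] at hv
      obtain ⟨x, _, rfl⟩ := hv
      simp [hr2 x.1 x.2]
    set tN : ℕ := Fintype.card V + 2 * p₀ - (D.card + 2 * k + 1) with htN
    have hkp : k - p₀ ≤ Fintype.card V - D.card := by
      rw [← hRcard, ← hUD]
      exact Finset.card_le_card hRsub
    have hVle := h.card_le
    have hCand : tN ≤ ((Finset.univ \ D) \ R).card := by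
      rw [Finset.card_sdiff_of_subset hRsub, hRcard, hUD, htN]
      omega
    obtain ⟨Q, hQsub, hQcard⟩ := Finset.exists_subset_card_eq hCand
    have hQD : ∀ v ∈ Q, v ∉ D := by
      intro v hv
      have := hQsub hv
      rw [Finset.mem_sdiff] at this
      exact (Finset.mem_sdiff.mp this.1).2
    have hQR : ∀ v ∈ Q, v ∉ R := fun v hv => (Finset.mem_sdiff.mp (hQsub hv)).2
    have htNp₀ : tN ≤ p₀ := by
      rw [htN]
      omega
    have hQk : Q.card ≤ k := by
      rw [hQcard]
      omega
    -- SDR on Q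
    have hSDR : ∀ s : Finset {q // q ∈ Q}, s.card ≤ (s.biUnion fun q => L q.1).card := by
      intro s
      rcases s.eq_empty_or_nonempty with rfl | ⟨q, hq⟩
      · simp
      · have h1 : s.card ≤ Q.card := by
          calc s.card ≤ Fintype.card {q // q ∈ Q} := by
                simpa using Finset.card_le_card (Finset.subset_univ s)
          _ = Q.card := Fintype.card_coe Q
        calc s.card ≤ k := h1.trans hQk
        _ ≤ (L q.1).card := h.lists q.1
        _ ≤ (s.biUnion fun q => L q.1).card :=
            Finset.card_le_card (Finset.subset_biUnion_of_mem (fun q : {q // q ∈ Q} => L q.1) hq)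
    obtain ⟨cQ, hcQinj, hcQmem⟩ :=
      (Finset.all_card_le_biUnion_card_iff_exists_injective
        (fun q : {q // q ∈ Q} => L q.1)).mp hSDR
    set UsedQ : Finset ℕ := Finset.univ.image cQ with hUsedQ
    have hUsedQcard : UsedQ.card = tN := by
      rw [hUsedQ, Finset.card_image_of_injective _ hcQinj, Finset.card_univ,
        Fintype.card_coe, hQcard]
    -- the residual graph
    set Ws : Finset V := (Finset.univ \ D) \ Q with hWs
    have hQsub' : Q ⊆ Finset.univ \ D := hQsub.trans Finset.sdiff_subset
    have hWscard : Ws.card = Fintype.card V - D.card - tN := by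
      rw [hWs, Finset.card_sdiff_of_subset hQsub', hUD, hQcard]
    have hmemWs : ∀ v : V, v ∈ Ws ↔ (v ∉ D ∧ v ∉ Q) := by
      intro v
      rw [hWs]
      simp [Finset.mem_sdiff]
    set H : SimpleGraph {v : V // v ∈ Ws} := SimpleGraph.comap Subtype.val G with hH
    have hcardW : Fintype.card {v : V // v ∈ Ws} = Ws.card := Fintype.card_coe Ws
    have hRPmem : ∀ w : {v : V // v ∈ Ws}, p w.1 ∈ RP := by
      intro w
      rw [hRP, Finset.mem_filter]
      refine ⟨Finset.mem_univ _, fun hsub2 => ?_⟩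
      have hwD : w.1 ∈ D := hsub2 (by simp [part])
      exact ((hmemWs w.1).mp w.2).1 hwD
    set e := Finset.equivFinOfCardEq hRPcard with he
    set q' : {v : V // v ∈ Ws} → Fin (k - p₀) := fun w => e ⟨p w.1, hRPmem w⟩ with hq'
    have hq'surj : Function.Surjective q' := by
      intro i
      set x : {a // a ∈ RP} := e.symm i with hx
      have hex : e x = i := e.apply_symm_apply i
      have hv1 := hr1 x.1 x.2
      have hv2 := hr2 x.1 x.2
      have hvR : r x.1 x.2 ∈ R := by
        rw [hRdef]
        exact Finset.mem_image_of_mem _ (Finset.mem_attach RP x)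
      have hvQ : r x.1 x.2 ∉ Q := fun hq => hQR _ hq hvR
      have hvW : r x.1 x.2 ∈ Ws := (hmemWs _).mpr ⟨hv2, hvQ⟩
      refine ⟨⟨_, hvW⟩, ?_⟩
      show e ⟨p (r x.1 x.2), _⟩ = i
      rw [show (⟨p (r x.1 x.2), hRPmem ⟨_, hvW⟩⟩ : {a // a ∈ RP}) = x from Subtype.ext hv1]
      exact hex
    have hq'iff : ∀ u w : {v : V // v ∈ Ws}, q' u = q' w ↔ p u.1 = p w.1 := by
      intro u w
      constructor
      · intro hq
        exact congrArg Subtype.val (e.injective hq)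
      · intro hp2
        rw [hq']
        exact congrArg e (Subtype.ext hp2)
    have hq'adj : ∀ u w : {v : V // v ∈ Ws}, H.Adj u w ↔ q' u ≠ q' w := by
      intro u w
      rw [hH, SimpleGraph.comap_adj, h.adj_iff]
      exact not_congr (hq'iff u w).symm
    have hchrom : H.chromaticNumber = ((k - p₀ : ℕ) : ℕ∞) :=
      chromaticNumber_eq_of_parts H q' hq'surj hq'adj
    have hVpos : 1 ≤ Fintype.card V := Fintype.card_pos
    have hlt : Fintype.card {v : V // v ∈ Ws} < Fintype.card V := by
      rw [hcardW, hWscard]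
      omega
    have hle2 : Fintype.card {v : V // v ∈ Ws} ≤ 2 * (k - p₀) + 1 := by
      rw [hcardW, hWscard, htN]
      omega
    have hmin := h.minimal {v : V // v ∈ Ws} H (k - p₀) hlt hchrom hle2
    have hchoos : Choosable H (k - p₀) := by
      have hne2 : {n | Choosable H n}.Nonempty := ⟨Fintype.card {v : V // v ∈ Ws}, choosable_card H⟩
      have hmem2 : Choosable H (sInf {n | Choosable H n}) := Nat.sInf_mem hne2
      rwa [show sInf {n | Choosable H n} = listChromaticNumber H from rfl, hmin] at hmem2
    set L' : {v : V // v ∈ Ws} → Finset ℕ := fun w => L w.1 \ UsedQ with hL'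
    have hL'card : ∀ w : {v : V // v ∈ Ws}, k - p₀ ≤ (L' w).card := by
      intro w
      have h1 : (L w.1).card - UsedQ.card ≤ (L' w).card := Finset.le_card_sdiff _ _
      have h2 := h.lists w.1
      rw [hUsedQcard] at h1
      omega
    obtain ⟨f, hf1, hf2⟩ := hchoos L' hL'card
    set F : V → ℕ := fun v =>
      if hD : v ∈ D then g ⟨v, hD⟩
      else if hQ : v ∈ Q then cQ ⟨v, hQ⟩
      else f ⟨v, (hmemWs v).mpr ⟨hD, hQ⟩⟩ with hF
    have hFD : ∀ (v : V) (hD : v ∈ D), F v = g ⟨v, hD⟩ := by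
      intro v hD
      simp only [hF, dif_pos hD]
    have hFQ : ∀ (v : V) (hD : v ∉ D) (hQ : v ∈ Q), F v = cQ ⟨v, hQ⟩ := by
      intro v hD hQ
      simp only [hF, dif_neg hD, dif_pos hQ]
    have hFW : ∀ (v : V) (hD : v ∉ D) (hQ : v ∉ Q), F v = f ⟨v, (hmemWs v).mpr ⟨hD, hQ⟩⟩ := by
      intro v hD hQ
      simp only [hF, dif_neg hD, dif_neg hQ]
    have hfL : ∀ w : {v : V // v ∈ Ws}, f w ∈ L w.1 ∧ f w ∉ UsedQ := by
      intro w
      have := hf1 w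
      rw [hL'] at this
      exact Finset.mem_sdiff.mp this
    have hcQU : ∀ q : {q // q ∈ Q}, cQ q ∈ UsedQ := by
      intro q
      rw [hUsedQ]
      exact Finset.mem_image_of_mem _ (Finset.mem_univ q)
    apply h.bad
    refine ⟨F, ?_, ?_⟩
    · intro v
      by_cases hD : v ∈ D
      · rw [hFD v hD]; exact hgL ⟨v, hD⟩
      · by_cases hQ : v ∈ Q
        · rw [hFQ v hD hQ]; exact hcQmem ⟨v, hQ⟩
        · rw [hFW v hD hQ]; exact (hfL _).1
    · intro u w hadj heq
      have hpuw : p u ≠ p w := (h.adj_iff u w).mp hadj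
      have hneq : u ≠ w := fun hh => hpuw (by rw [hh])
      by_cases hud : u ∈ D
      · by_cases hwd : w ∈ D
        · rw [hFD u hud, hFD w hwd] at heq
          exact hneq (congrArg Subtype.val (hginj heq))
        · by_cases hwq : w ∈ Q
          · rw [hFD u hud, hFQ w hwd hwq] at heq
            exact hAout w hwd _ (heq ▸ hgA ⟨u, hud⟩) (hcQmem ⟨w, hwq⟩)
          · rw [hFD u hud, hFW w hwd hwq] at heq
            exact hAout w hwd _ (heq ▸ hgA ⟨u, hud⟩) (hfL _).1
      · by_cases hwd : w ∈ D
        · by_cases huq : u ∈ Q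
          · rw [hFQ u hud huq, hFD w hwd] at heq
            exact hAout u hud _ (heq.symm ▸ hgA ⟨w, hwd⟩) (hcQmem ⟨u, huq⟩)
          · rw [hFW u hud huq, hFD w hwd] at heq
            exact hAout u hud _ (heq.symm ▸ hgA ⟨w, hwd⟩) (hfL _).1
        · by_cases huq : u ∈ Q
          · by_cases hwq : w ∈ Q
            · rw [hFQ u hud huq, hFQ w hwd hwq] at heq
              exact hneq (congrArg Subtype.val (hcQinj heq))
            · rw [hFQ u hud huq, hFW w hwd hwq] at heq
              exact (hfL _).2 (heq ▸ hcQU ⟨u, huq⟩)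
          · by_cases hwq : w ∈ Q
            · rw [hFW u hud huq, hFQ w hwd hwq] at heq
              exact (hfL _).2 (heq.symm ▸ hcQU ⟨w, hwq⟩)
            · rw [hFW u hud huq, hFW w hwd hwq] at heq
              have hadj' : H.Adj ⟨u, (hmemWs u).mpr ⟨hud, huq⟩⟩ ⟨w, (hmemWs w).mpr ⟨hwd, hwq⟩⟩ := by
                rw [hH, SimpleGraph.comap_adj]
                exact hadj
              exact hf2 hadj' heq
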